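/- If H is a graph whose Laplacian satisfies (1-ε) L_G ⪯ L_H ⪯ (1+ε) L_G for 0 < ε < 1/3 (a spectral ε-sparsifier), then λ₂(D_H^{-1/2} L_H D_H^{-1/2}) >= (1 - 3ε) λ₂(D_G^{-1/2} L_G D_G^{-1/2}). -/

import Mathlib

set_option linter.unusedSectionVars false

open Matrix BigOperators

section Aux

variable {ι : Type*} [Fintype ι] [DecidableEq ι]

lemma conj_quadform (s : ι → ℝ) (L : Matrix ι ι ℝ) (x : ι → ℝ) :
    x ⬝ᵥ (Matrix.diagonal s * L * Matrix.diagonal s).mulVec x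
      = (fun i => s i * x i) ⬝ᵥ L.mulVec (fun i => s i * x i) := by
  simp only [Matrix.mulVec, dotProduct, Matrix.mul_apply, Matrix.diagonal_apply,
    ite_mul, mul_ite, zero_mul, mul_zero, Finset.sum_ite_eq, Finset.sum_ite_eq',
    Finset.mem_univ, if_true, Finset.mul_sum, Finset.sum_mul]
  apply Finset.sum_congr rfl; intro i _
  apply Finset.sum_congr rfl; intro j _
  ring

lemma dot_self_pos {x : ι → ℝ} (hx : x ≠ 0) : 0 < x ⬝ᵥ x := by
  rcases lt_or_eq_of_le (Finset.sum_nonneg fun i _ => mul_self_nonneg (x i) :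
      (0:ℝ) ≤ x ⬝ᵥ x) with h | h
  · exact h
  · exact absurd (dotProduct_self_eq_zero.mp h.symm) hx

lemma ray_abs_le (M : Matrix ι ι ℝ) (x : ι → ℝ) (hx : x ≠ 0) :
    |x ⬝ᵥ M.mulVec x / (x ⬝ᵥ x)| ≤ ∑ i, ∑ j, |M i j| := by
  have hS : 0 < x ⬝ᵥ x := dot_self_pos hx
  have hxx : ∀ i j, |x i * x j| ≤ x ⬝ᵥ x := by
    intro i j
    have h1 : x i * x i ≤ x ⬝ᵥ x :=
      Finset.single_le_sum (fun k _ => mul_self_nonneg (x k)) (Finset.mem_univ i)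
    have h2 : x j * x j ≤ x ⬝ᵥ x :=
      Finset.single_le_sum (fun k _ => mul_self_nonneg (x k)) (Finset.mem_univ j)
    rw [abs_le]
    constructor <;> nlinarith [sq_nonneg (x i - x j), sq_nonneg (x i + x j)]
  have hnum : |x ⬝ᵥ M.mulVec x| ≤ (∑ i, ∑ j, |M i j|) * (x ⬝ᵥ x) := by
    calc |x ⬝ᵥ M.mulVec x| = |∑ i, ∑ j, x i * (M i j * x j)| := by
          simp [dotProduct, Matrix.mulVec, Finset.mul_sum]
      _ ≤ ∑ i, |∑ j, x i * (M i j * x j)| := Finset.abs_sum_le_sum_abs _ _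
      _ ≤ ∑ i, ∑ j, |x i * (M i j * x j)| :=
          Finset.sum_le_sum fun i _ => Finset.abs_sum_le_sum_abs _ _
      _ ≤ ∑ i, ∑ j, |M i j| * (x ⬝ᵥ x) := by
          refine Finset.sum_le_sum fun i _ => Finset.sum_le_sum fun j _ => ?_
          have : |x i * (M i j * x j)| = |M i j| * |x i * x j| := by
            rw [← abs_mul]; ring_nf
          rw [this]
          exact mul_le_mul_of_nonneg_left (hxx i j) (abs_nonneg _)
      _ = (∑ i, ∑ j, |M i j|) * (x ⬝ᵥ x) := by rw [Finset.sum_mul]; exact Finset.sum_congr rfl fun i _ => (Finset.sum_mul _ _ _).symm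
          
  rw [abs_div, abs_of_pos hS, div_le_iff₀ hS]
  exact hnum

lemma exists_mem_ne_zero_of_finrank_eq_two {U : Submodule ℝ (ι → ℝ)}
    (hU : Module.finrank ℝ U = 2) : ∃ x, x ∈ U ∧ x ≠ 0 := by
  have hbot : U ≠ ⊥ := by
    intro h
    rw [h, finrank_bot] at hU
    omega
  rcases Submodule.ne_bot_iff U |>.mp hbot with ⟨x, hxU, hx0⟩
  exact ⟨x, hxU, hx0⟩

end Aux

/-- The second smallest eigenvalue of a symmetric matrix, via the
Courant–Fischer min-max characterization. -/
noncomputable def lambda2 {ι : Type*} [Fintype ι] (M : Matrix ι ι ℝ) : ℝ :=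
  ⨅ U : {U : Submodule ℝ (ι → ℝ) // Module.finrank ℝ U = 2},
    ⨆ x : {x : ι → ℝ // x ∈ U.1 ∧ x ≠ 0},
      (x.1 ⬝ᵥ M.mulVec x.1) / (x.1 ⬝ᵥ x.1)

section Bdd

variable {ι : Type*} [Fintype ι] [DecidableEq ι]

lemma bddAbove_ray (M : Matrix ι ι ℝ) (U : Submodule ℝ (ι → ℝ)) :
    BddAbove (Set.range fun x : {x : ι → ℝ // x ∈ U ∧ x ≠ 0} =>
      (x.1 ⬝ᵥ M.mulVec x.1) / (x.1 ⬝ᵥ x.1)) := by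
  refine ⟨∑ i, ∑ j, |M i j|, ?_⟩
  rintro _ ⟨x, rfl⟩
  exact (abs_le.mp (ray_abs_le M x.1 x.2.2)).2

lemma sup_ray_lb (M : Matrix ι ι ℝ) (U : {U : Submodule ℝ (ι → ℝ) // Module.finrank ℝ U = 2}) :
    -(∑ i, ∑ j, |M i j|) ≤ ⨆ x : {x : ι → ℝ // x ∈ U.1 ∧ x ≠ 0},
      (x.1 ⬝ᵥ M.mulVec x.1) / (x.1 ⬝ᵥ x.1) := by
  obtain ⟨x0, hx0U, hx00⟩ := exists_mem_ne_zero_of_finrank_eq_two U.2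
  refine le_trans (abs_le.mp (ray_abs_le M x0 hx00)).1 ?_
  exact le_ciSup (bddAbove_ray M U.1) ⟨x0, hx0U, hx00⟩

end Bdd

theorem sparsifier_preserves_lambda2 (n : ℕ)
    (AG AH : Matrix (Fin n) (Fin n) ℝ)
    (hsymG : AG.IsSymm) (hnonnegG : ∀ i j, 0 ≤ AG i j) (hloopG : ∀ i, AG i i = 0)
    (hsymH : AH.IsSymm) (hnonnegH : ∀ i j, 0 ≤ AH i j) (hloopH : ∀ i, AH i i = 0)
    (hdposG : ∀ i, 0 < ∑ j, AG i j) (hdposH : ∀ i, 0 < ∑ j, AH i j)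
    (LG LH : Matrix (Fin n) (Fin n) ℝ)
    (hLG : LG = Matrix.diagonal (fun i => ∑ j, AG i j) - AG)
    (hLH : LH = Matrix.diagonal (fun i => ∑ j, AH i j) - AH)
    (hconnG : ∀ x : Fin n → ℝ, LG.mulVec x = 0 → ∃ c : ℝ, ∀ i, x i = c)
    (hconnH : ∀ x : Fin n → ℝ, LH.mulVec x = 0 → ∃ c : ℝ, ∀ i, x i = c)
    (ε : ℝ) (hε : 0 < ε) (hε3 : ε < 1 / 3)
    (hlower : (LH - (1 - ε) • LG).PosSemidef)
    (hupper : ((1 + ε) • LG - LH).PosSemidef) :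
    lambda2 (Matrix.diagonal (fun i => (Real.sqrt (∑ j, AH i j))⁻¹) * LH
        * Matrix.diagonal (fun i => (Real.sqrt (∑ j, AH i j))⁻¹))
      ≥ (1 - 3 * ε) *
        lambda2 (Matrix.diagonal (fun i => (Real.sqrt (∑ j, AG i j))⁻¹) * LG
        * Matrix.diagonal (fun i => (Real.sqrt (∑ j, AG i j))⁻¹)) := by
  classical
  set dG : Fin n → ℝ := fun i => ∑ j, AG i j with hdG
  set dH : Fin n → ℝ := fun i => ∑ j, AH i j with hdH
  set sG : Fin n → ℝ := fun i => (Real.sqrt (dG i))⁻¹ with hsG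
  set sH : Fin n → ℝ := fun i => (Real.sqrt (dH i))⁻¹ with hsHdef
  set NG := Matrix.diagonal sG * LG * Matrix.diagonal sG with hNG
  set NH := Matrix.diagonal sH * LH * Matrix.diagonal sH with hNH
  rw [ge_iff_le]
  -- trivial case: n < 2
  rcases lt_or_ge n 2 with hn | hn
  · haveI : IsEmpty {U : Submodule ℝ (Fin n → ℝ) // Module.finrank ℝ U = 2} := by
      constructor
      rintro ⟨U, hU⟩
      have h1 : Module.finrank ℝ U ≤ Module.finrank ℝ (Fin n → ℝ) := U.finrank_le
      rw [hU, Module.finrank_fin_fun] at h1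
      omega
    rw [lambda2, lambda2, Real.iInf_of_isEmpty, Real.iInf_of_isEmpty]
    simp
  -- main case
  have hsqrtG : ∀ i, (0:ℝ) < Real.sqrt (dG i) := fun i => Real.sqrt_pos.mpr (hdposG i)
  have hsqrtH : ∀ i, (0:ℝ) < Real.sqrt (dH i) := fun i => Real.sqrt_pos.mpr (hdposH i)
  have hsHne : ∀ i, sH i ≠ 0 := fun i => inv_ne_zero (hsqrtH i).ne'
  -- degree comparison
  have hdeg : ∀ i, dH i ≤ (1 + ε) * dG i := by
    intro i
    have h := hupper.dotProduct_mulVec_nonneg (Pi.single i 1)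
    rw [Matrix.mulVec_single] at h
    simp only [star_trivial, mul_one, single_dotProduct, one_mul] at h
    have hGd : LG i i = dG i := by rw [hLG]; simp [hloopG i]
    have hHd : LH i i = dH i := by rw [hLH]; simp [hloopH i]
    simp only [MulOpposite.op_one, one_smul, Matrix.col_apply, Matrix.sub_apply, Matrix.smul_apply, smul_eq_mul, hGd, hHd] at h
    linarith
  -- core pointwise inequality
  have h13 : (0:ℝ) < 1 - 3 * ε := by linarith
  -- the scaling equivalence
  set m : Fin n → ℝ := fun i => Real.sqrt (dG i) * sH i with hm
  have hmne : ∀ i, m i ≠ 0 := fun i => mul_ne_zero (hsqrtG i).ne' (hsHne i)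
  set e : (Fin n → ℝ) ≃ₗ[ℝ] (Fin n → ℝ) :=
    LinearEquiv.piCongrRight (fun i => LinearEquiv.smulOfNeZero ℝ ℝ (m i) (hmne i)) with he
  have heapp : ∀ (x : Fin n → ℝ) (i : Fin n), e x i = m i * x i := fun x i => rfl
  -- core pointwise inequality
  have core : ∀ x : Fin n → ℝ, x ≠ 0 →
      (1 - 3 * ε) * ((e x ⬝ᵥ NG.mulVec (e x)) / (e x ⬝ᵥ e x))
        ≤ (x ⬝ᵥ NH.mulVec x) / (x ⬝ᵥ x) := by
    intro x hx0
    set y : Fin n → ℝ := fun i => sH i * x i with hy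
    have hy0 : y ≠ 0 := by
      intro h
      apply hx0
      funext i
      have := congrFun h i
      simp only [hy, Pi.zero_apply] at this ⊢
      rcases mul_eq_zero.mp this with h' | h'
      · exact absurd h' (hsHne i)
      · exact h'
    set a : ℝ := y ⬝ᵥ LG.mulVec y with ha'
    set b : ℝ := y ⬝ᵥ LH.mulVec y with hb'
    set p : ℝ := ∑ i, dG i * (y i * y i) with hp'
    set q : ℝ := ∑ i, dH i * (y i * y i) with hq'
    -- quadratic form comparisons from PSD hypotheses
    have hlow := hlower.dotProduct_mulVec_nonneg y
    have hup := hupper.dotProduct_mulVec_nonneg y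
    simp only [star_trivial, Matrix.sub_mulVec, Matrix.smul_mulVec,
      dotProduct_sub, dotProduct_smul, smul_eq_mul, ← ha', ← hb'] at hlow hup
    have hb : (1 - ε) * a ≤ b := by linarith
    have hbu : b ≤ (1 + ε) * a := by linarith
    have ha : 0 ≤ a := by nlinarith
    -- identify numerators and denominators
    have hnumH : x ⬝ᵥ NH.mulVec x = b := by
      rw [hNH, conj_quadform]
    have hdenH : x ⬝ᵥ x = q := by
      rw [dotProduct, hq']
      refine Finset.sum_congr rfl fun i _ => ?_
      have hs : Real.sqrt (dH i) ≠ 0 := (hsqrtH i).ne'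
      have hss : Real.sqrt (dH i) * Real.sqrt (dH i) = dH i := Real.mul_self_sqrt (hdposH i).le
      simp only [hy, hsHdef]
      rw [← hss]
      field_simp
      rw [Real.sqrt_sq (hsqrtH i).le]
    have hyG : (fun i => sG i * (e x) i) = y := by
      funext i
      simp only [heapp, hy, hsG, hm]
      rw [← mul_assoc, ← mul_assoc, inv_mul_cancel₀ (hsqrtG i).ne', one_mul]
    have hnumG : e x ⬝ᵥ NG.mulVec (e x) = a := by
      rw [hNG, conj_quadform, hyG]
    have hdenG : e x ⬝ᵥ e x = p := by
      rw [dotProduct, hp']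
      refine Finset.sum_congr rfl fun i _ => ?_
      have hss : Real.sqrt (dG i) * Real.sqrt (dG i) = dG i := Real.mul_self_sqrt (hdposG i).le
      simp only [heapp, hy, hm]
      linear_combination (sH i * x i * (sH i * x i)) * hss
    obtain ⟨i0, hi0⟩ : ∃ i, y i ≠ 0 := by
      by_contra h
      push_neg at h
      exact hy0 (funext h)
    have hppos : 0 < p :=
      Finset.sum_pos' (fun i _ => mul_nonneg (hdposG i).le (mul_self_nonneg _))
        ⟨i0, Finset.mem_univ _, mul_pos (hdposG i0) (mul_self_pos.mpr hi0)⟩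
    have hqpos : 0 < q :=
      Finset.sum_pos' (fun i _ => mul_nonneg (hdposH i).le (mul_self_nonneg _))
        ⟨i0, Finset.mem_univ _, mul_pos (hdposH i0) (mul_self_pos.mpr hi0)⟩
    have hqp : q ≤ (1 + ε) * p := by
      rw [hp', hq', Finset.mul_sum]
      refine Finset.sum_le_sum fun i _ => ?_
      nlinarith [mul_le_mul_of_nonneg_right (hdeg i) (mul_self_nonneg (y i))]
    rw [hnumH, hdenH, hnumG, hdenG, mul_div_assoc', div_le_div_iff₀ hppos hqpos]
    nlinarith [mul_le_mul_of_nonneg_left hqp (mul_nonneg h13.le ha),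
      mul_le_mul_of_nonneg_right hb hppos.le,
      mul_nonneg (mul_nonneg hε.le ha) hppos.le,
      mul_nonneg (mul_nonneg (mul_nonneg hε.le hε.le) ha) hppos.le]
  -- now the min-max argument
  haveI : Nonempty {U : Submodule ℝ (Fin n → ℝ) // Module.finrank ℝ U = 2} := by
    let bb : Fin 2 → (Fin n → ℝ) := fun i => Pi.single (Fin.castLE hn i) 1
    have hbb : bb = (Pi.basisFun ℝ (Fin n)) ∘ Fin.castLE hn := by
      funext i
      simp [bb, Pi.basisFun_apply]
    have hli : LinearIndependent ℝ bb := by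
      rw [hbb]
      exact (Pi.basisFun ℝ (Fin n)).linearIndependent.comp _ (Fin.castLE_injective hn)
    exact ⟨⟨Submodule.span ℝ (Set.range bb), by
      rw [finrank_span_eq_card hli]; simp⟩⟩
  unfold lambda2
  refine le_ciInf fun U => ?_
  set W : Submodule ℝ (Fin n → ℝ) := U.1.map (e : (Fin n → ℝ) →ₗ[ℝ] (Fin n → ℝ)) with hW
  have hWrank : Module.finrank ℝ W = 2 := by
    rw [hW, LinearEquiv.finrank_map_eq]
    exact U.2
  have hstep1 := ciInf_le (f := fun V : {V : Submodule ℝ (Fin n → ℝ) // Module.finrank ℝ V = 2} =>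
      ⨆ x : {x : Fin n → ℝ // x ∈ V.1 ∧ x ≠ 0}, (x.1 ⬝ᵥ NG.mulVec x.1) / (x.1 ⬝ᵥ x.1))
    (⟨-(∑ i, ∑ j, |NG i j|), by
      rintro _ ⟨V, rfl⟩
      exact sup_ray_lb NG V⟩) ⟨W, hWrank⟩
  refine le_trans (mul_le_mul_of_nonneg_left hstep1 h13.le) ?_
  haveI hWne : Nonempty {x : Fin n → ℝ // x ∈ W ∧ x ≠ 0} := by
    obtain ⟨x, h1, h2⟩ := exists_mem_ne_zero_of_finrank_eq_two hWrank
    exact ⟨⟨x, h1, h2⟩⟩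
  rw [mul_comm, ← le_div_iff₀ h13]
  refine ciSup_le fun x' => ?_
  rw [le_div_iff₀ h13, mul_comm]
  obtain ⟨x, hxU, hex⟩ := Submodule.mem_map.mp x'.2.1
  have hx0 : x ≠ 0 := fun h => x'.2.2 (by rw [← hex, h, map_zero])
  have h1 := core x hx0
  rw [show (e x : Fin n → ℝ) = x'.1 from hex] at h1
  exact le_trans h1 (le_ciSup (bddAbove_ray NH U.1) ⟨x, hxU, hx0⟩)
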